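/- For any 0 < δ < 1/2 and integers 0 < a < b, there exists λ > 0 such that for every integer k ≥ 1 and every x ∈ (δ, 1-δ), |P(B_{k,x} mod b ∈ {0,1,...,a-1}) - a/b| ≤ e^{-λk}. -/

import Mathlib

open Finset Complex

lemma aux_dvd_iff (b i r : ℕ) (hr : r < b) : (b:ℤ) ∣ (i:ℤ) - (r:ℤ) ↔ i % b = r := by
  rw [← Int.modEq_iff_dvd, Int.natCast_modEq_iff, Nat.ModEq, Nat.mod_eq_of_lt hr]
  exact eq_comm

lemma root_sum {b : ℕ} (hb : 0 < b) {ζ : ℂ} (hζ : IsPrimitiveRoot ζ b) (n : ℤ) :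
    ∑ j ∈ Finset.range b, (ζ ^ n) ^ j = if (b:ℤ) ∣ n then (b:ℂ) else 0 := by
  have hζ0 : ζ ≠ 0 := hζ.ne_zero hb.ne'
  by_cases h : (b:ℤ) ∣ n
  · rw [if_pos h, (hζ.zpow_eq_one_iff_dvd n).mpr h]
    simp
  · rw [if_neg h]
    have h1 : ζ ^ n ≠ 1 := fun hh => h ((hζ.zpow_eq_one_iff_dvd n).mp hh)
    rw [geom_sum_eq h1]
    have : (ζ ^ n) ^ b = 1 := by
      rw [← zpow_natCast (ζ ^ n) b, ← zpow_mul, mul_comm, zpow_mul, zpow_natCast, hζ.pow_eq_one, one_zpow]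
    rw [this]; simp

lemma main_id (a b : ℕ) (hb : 0 < b) (hab : a < b) {ζ : ℂ} (hζ : IsPrimitiveRoot ζ b)
    (k : ℕ) (x : ℂ) :
    (b:ℂ) * (∑ i ∈ (Finset.range (k+1)).filter (fun i => i % b < a),
        (k.choose i : ℂ) * x^i * (1-x)^(k-i))
    = ∑ j ∈ Finset.range b, (∑ r ∈ Finset.range a, ζ ^ (-((j:ℤ)*(r:ℤ)))) * (x*ζ^j + (1-x))^k := by
  have hζ0 : ζ ≠ 0 := hζ.ne_zero hb.ne'
  have key : ∀ j i r : ℕ, ζ ^ (-((j:ℤ)*(r:ℤ))) * (ζ^j)^i = (ζ ^ ((i:ℤ)-(r:ℤ)))^j := by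
    intro j i r
    have h1 : ((ζ^j)^i : ℂ) = ζ ^ ((j:ℤ)*(i:ℤ)) := by
      rw [← pow_mul, ← zpow_natCast]; norm_cast
    have h2 : ((ζ ^ ((i:ℤ)-(r:ℤ)))^j : ℂ) = ζ ^ (((i:ℤ)-(r:ℤ))*(j:ℤ)) := by
      rw [← zpow_natCast (ζ ^ ((i:ℤ)-(r:ℤ))) j, ← zpow_mul]
    rw [h1, h2, ← zpow_add₀ hζ0]
    congr 1; ring
  symm
  calc ∑ j ∈ Finset.range b, (∑ r ∈ Finset.range a, ζ ^ (-((j:ℤ)*(r:ℤ)))) * (x*ζ^j + (1-x))^k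
      = ∑ j ∈ Finset.range b, ∑ r ∈ Finset.range a, ∑ i ∈ Finset.range (k+1),
          (k.choose i : ℂ) * x^i * (1-x)^(k-i) * (ζ ^ ((i:ℤ)-(r:ℤ)))^j := by
        refine Finset.sum_congr rfl fun j _ => ?_
        rw [add_pow, Finset.sum_mul_sum]
        refine Finset.sum_congr rfl fun r _ => Finset.sum_congr rfl fun i _ => ?_
        rw [mul_pow, ← key j i r]
        ring
    _ = ∑ i ∈ Finset.range (k+1), (k.choose i : ℂ) * x^i * (1-x)^(k-i) *
          (∑ r ∈ Finset.range a, ∑ j ∈ Finset.range b, (ζ ^ ((i:ℤ)-(r:ℤ)))^j) := by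
        conv_lhs => rw [Finset.sum_comm]
        conv_rhs => simp only [Finset.mul_sum]
        conv_rhs => rw [Finset.sum_comm]
        exact Finset.sum_congr rfl fun r _ => Finset.sum_comm
    _ = ∑ i ∈ Finset.range (k+1), (k.choose i : ℂ) * x^i * (1-x)^(k-i) *
          (if i % b < a then (b:ℂ) else 0) := by
        refine Finset.sum_congr rfl fun i _ => ?_
        congr 1
        calc ∑ r ∈ Finset.range a, ∑ j ∈ Finset.range b, (ζ ^ ((i:ℤ)-(r:ℤ)))^j
            = ∑ r ∈ Finset.range a, if r = i % b then (b:ℂ) else 0 := by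
              refine Finset.sum_congr rfl fun r hr => ?_
              rw [root_sum hb hζ]
              have := aux_dvd_iff b i r (lt_trans (Finset.mem_range.mp hr) hab)
              simp only [this]
              congr 1
              exact propext ⟨fun h => h.symm, fun h => h.symm⟩
          _ = if i % b ∈ Finset.range a then (b:ℂ) else 0 := Finset.sum_ite_eq' _ _ _
          _ = if i % b < a then (b:ℂ) else 0 := by simp [Finset.mem_range]
    _ = (b:ℂ) * (∑ i ∈ (Finset.range (k+1)).filter (fun i => i % b < a),
        (k.choose i : ℂ) * x^i * (1-x)^(k-i)) := by
        rw [Finset.sum_filter, Finset.mul_sum]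
        refine Finset.sum_congr rfl fun i _ => ?_
        split_ifs <;> ring

lemma norm_sq_mix (x y : ℝ) (hxy : x + y = 1) (z : ℂ) (hz : ‖z‖ = 1) :
    Complex.normSq ((x:ℂ) * z + (y:ℂ)) = 1 - x*y*Complex.normSq (1 - z) := by
  have h : z.re * z.re + z.im * z.im = 1 := by
    have h2 := Complex.sq_norm z
    rw [hz, Complex.normSq_apply] at h2
    nlinarith [h2]
  simp only [Complex.normSq_apply, Complex.add_re, Complex.add_im, Complex.mul_re,
    Complex.mul_im, Complex.sub_re, Complex.sub_im, Complex.one_re, Complex.one_im,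
    Complex.ofReal_re, Complex.ofReal_im]
  linear_combination (x^2 + x*y) * h + (x + y + 1) * hxy

set_option maxHeartbeats 1000000 in
theorem stmt_4 (δ : ℝ) (hδ : 0 < δ) (hδ' : δ < 1/2) (a b : ℕ) (ha : 0 < a) (hab : a < b) :
    ∃ lam > (0:ℝ), ∀ k : ℕ, 1 ≤ k → ∀ x ∈ Set.Ioo δ (1-δ),
      |(∑ i ∈ (Finset.range (k+1)).filter (fun i => i % b < a),
          (k.choose i : ℝ) * x^i * (1-x)^(k-i)) - a/b|
        ≤ Real.exp (-lam * k) := by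
  have hb : 0 < b := lt_trans ha hab
  have hb2 : 2 ≤ b := by omega
  set ζ : ℂ := Complex.exp (2 * Real.pi * Complex.I / b) with hζdef
  have hζ : IsPrimitiveRoot ζ b := Complex.isPrimitiveRoot_exp b hb.ne'
  have hζ0 : ζ ≠ 0 := hζ.ne_zero hb.ne'
  have habs : ‖ζ‖ = 1 := by
    rw [hζdef]
    have : (2 * ↑Real.pi * Complex.I / (b:ℂ)) = ((2 * Real.pi / b : ℝ) : ℂ) * Complex.I := by
      push_cast; ring
    rw [this, Complex.norm_exp_ofReal_mul_I]
  -- ε : min of normSq (1 - ζ^j) over 0 < j < b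
  have hne : ((Finset.Ioo 0 b).image fun j => Complex.normSq (1 - ζ^j)).Nonempty :=
    Finset.Nonempty.image ⟨1, by simp [Finset.mem_Ioo]; omega⟩ _
  set ε : ℝ := ((Finset.Ioo 0 b).image fun j => Complex.normSq (1 - ζ^j)).min' hne with hεdef
  have hεpos : 0 < ε := by
    rw [hεdef]
    rw [Finset.lt_min'_iff]
    intro y hy
    rw [Finset.mem_image] at hy
    obtain ⟨j, hj, rfl⟩ := hy
    rw [Finset.mem_Ioo] at hj
    have : ζ ^ j ≠ 1 := hζ.pow_ne_one_of_pos_of_lt hj.1.ne' hj.2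
    exact Complex.normSq_pos.mpr (sub_ne_zero.mpr (Ne.symm this))
  have hεle : ∀ j ∈ Finset.Ioo 0 b, ε ≤ Complex.normSq (1 - ζ^j) := by
    intro j hj
    exact Finset.min'_le _ _ (Finset.mem_image_of_mem _ hj)
  set ρ : ℝ := max (Real.sqrt (1 - δ^2 * ε)) (1/2) with hρdef
  have hρ0 : 0 < ρ := lt_of_lt_of_le one_half_pos (le_max_right _ _)
  have hρ1 : ρ < 1 := by
    apply max_lt _ (by norm_num)
    rw [Real.sqrt_lt' one_pos]
    nlinarith [hεpos, hδ, mul_pos (mul_pos hδ hδ) hεpos]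
  -- per-k,x bound
  have key : ∀ k : ℕ, ∀ x : ℝ, x ∈ Set.Ioo δ (1-δ) →
      |(∑ i ∈ (Finset.range (k+1)).filter (fun i => i % b < a),
          (k.choose i : ℝ) * x^i * (1-x)^(k-i)) - a/b| ≤ (b:ℝ)^2 * ρ^k := by
    intro k x hx
    obtain ⟨hx1, hx2⟩ := hx
    set S : ℝ := ∑ i ∈ (Finset.range (k+1)).filter (fun i => i % b < a),
          (k.choose i : ℝ) * x^i * (1-x)^(k-i) with hSdef
    have hcast : ((S:ℝ):ℂ) = ∑ i ∈ (Finset.range (k+1)).filter (fun i => i % b < a),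
          (k.choose i : ℂ) * (x:ℂ)^i * (1-(x:ℂ))^(k-i) := by
      rw [hSdef]; push_cast; rfl
    have hid := main_id a b hb hab hζ k (x:ℂ)
    -- split off j = 0
    have h0mem : (0:ℕ) ∈ Finset.range b := Finset.mem_range.mpr hb
    have hsplit := (Finset.add_sum_erase (Finset.range b)
        (fun j => (∑ r ∈ Finset.range a, ζ ^ (-((j:ℤ)*(r:ℤ)))) * ((x:ℂ)*ζ^j + (1-(x:ℂ)))^k) h0mem).symm
    have h0term : (∑ r ∈ Finset.range a, ζ ^ (-(((0:ℕ):ℤ)*(r:ℤ)))) * ((x:ℂ)*ζ^(0:ℕ) + (1-(x:ℂ)))^k = (a:ℂ) := by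
      simp
    have hdiff : (b:ℂ) * ((S:ℝ):ℂ) - (a:ℂ) = ∑ j ∈ (Finset.range b).erase 0,
        (∑ r ∈ Finset.range a, ζ ^ (-((j:ℤ)*(r:ℤ)))) * ((x:ℂ)*ζ^j + (1-(x:ℂ)))^k := by
      rw [hcast, hid, hsplit, h0term]; ring
    -- bound each term
    have hterm : ∀ j ∈ (Finset.range b).erase 0,
        ‖(∑ r ∈ Finset.range a, ζ ^ (-((j:ℤ)*(r:ℤ)))) * ((x:ℂ)*ζ^j + (1-(x:ℂ)))^k‖
          ≤ (b:ℝ) * ρ^k := by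
      intro j hj
      rw [Finset.mem_erase, Finset.mem_range] at hj
      have habsj : ‖ζ^j‖ = 1 := by rw [norm_pow, habs, one_pow]
      have hw : ‖(x:ℂ)*ζ^j + (1-(x:ℂ))‖ ≤ ρ := by
        have h1 : (1-(x:ℂ)) = (((1-x:ℝ)):ℂ) := by push_cast; ring
        have hns : Complex.normSq ((x:ℂ)*ζ^j + ((1-x:ℝ):ℂ)) = 1 - x*(1-x)*Complex.normSq (1 - ζ^j) :=
          norm_sq_mix x (1-x) (by ring) (ζ^j) habsj
        have hmem : j ∈ Finset.Ioo 0 b := Finset.mem_Ioo.mpr ⟨Nat.pos_of_ne_zero hj.1, hj.2⟩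
        have hle : δ^2 * ε ≤ x*(1-x)*Complex.normSq (1 - ζ^j) := by
          apply mul_le_mul _ (hεle j hmem) (le_of_lt hεpos) (by nlinarith)
          nlinarith
        have hsq : Complex.normSq ((x:ℂ)*ζ^j + ((1-x:ℝ):ℂ)) ≤ 1 - δ^2*ε := by
          rw [hns]; linarith
        rw [h1, Complex.norm_def]
        calc Real.sqrt (Complex.normSq ((x:ℂ)*ζ^j + ((1-x:ℝ):ℂ)))
            ≤ Real.sqrt (1 - δ^2*ε) := Real.sqrt_le_sqrt hsq
          _ ≤ ρ := le_max_left _ _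
      have hsum : ‖∑ r ∈ Finset.range a, ζ ^ (-((j:ℤ)*(r:ℤ)))‖ ≤ (b:ℝ) := by
        calc ‖∑ r ∈ Finset.range a, ζ ^ (-((j:ℤ)*(r:ℤ)))‖
            ≤ ∑ r ∈ Finset.range a, ‖ζ ^ (-((j:ℤ)*(r:ℤ)))‖ :=
              norm_sum_le _ _
          _ = ∑ r ∈ Finset.range a, 1 := by
              refine Finset.sum_congr rfl fun r _ => ?_
              rw [norm_zpow, habs, one_zpow]
          _ = (a:ℝ) := by simp
          _ ≤ (b:ℝ) := by exact_mod_cast hab.le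
      rw [norm_mul, norm_pow]
      have h1 : ‖(x:ℂ)*ζ^j + (1-(x:ℂ))‖^k ≤ ρ^k :=
        pow_le_pow_left₀ (norm_nonneg _) hw k
      have h2 : (0:ℝ) ≤ ‖(x:ℂ)*ζ^j + (1-(x:ℂ))‖^k := pow_nonneg (norm_nonneg _) k
      exact mul_le_mul hsum h1 h2 (by positivity)
    have hbound : ‖(b:ℂ) * ((S:ℝ):ℂ) - (a:ℂ)‖ ≤ (b:ℝ) * ((b:ℝ) * ρ^k) := by
      rw [hdiff]
      refine le_trans (norm_sum_le _ _) ?_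
      refine le_trans (Finset.sum_le_sum hterm) ?_
      rw [Finset.sum_const, nsmul_eq_mul]
      apply mul_le_mul_of_nonneg_right _ (by positivity)
      have : ((Finset.range b).erase 0).card ≤ b := by
        calc ((Finset.range b).erase 0).card ≤ (Finset.range b).card :=
              Finset.card_le_card (Finset.erase_subset _ _)
          _ = b := Finset.card_range b
      exact_mod_cast this
    -- convert to real
    have hrel : (b:ℝ) * |S - a/b| = ‖(b:ℂ) * ((S:ℝ):ℂ) - (a:ℂ)‖ := by
      have hbC : (b:ℂ) ≠ 0 := Nat.cast_ne_zero.mpr hb.ne'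
      have heq : (b:ℂ) * ((S:ℝ):ℂ) - (a:ℂ) = (((b:ℝ) * (S - a/b) : ℝ) : ℂ) := by
        push_cast
        field_simp
      rw [heq, Complex.norm_real, Real.norm_eq_abs, abs_mul, Nat.abs_cast]
    have hbR : (0:ℝ) < b := by exact_mod_cast hb
    have hfin : (b:ℝ) * |S - a/b| ≤ (b:ℝ) * ((b:ℝ) * ρ^k) := by rw [hrel]; exact hbound
    have h1 : |S - a/b| ≤ (b:ℝ) * ρ^k := le_of_mul_le_mul_left hfin hbR
    have hb1 : (1:ℝ) ≤ (b:ℝ) := by exact_mod_cast hb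
    have h2 : (b:ℝ) * ρ^k ≤ (b:ℝ)^2 * ρ^k :=
      mul_le_mul_of_nonneg_right (by nlinarith) (pow_nonneg hρ0.le k)
    linarith
  -- trivial bound
  set m : ℝ := max ((a:ℝ)/b) (1 - (a:ℝ)/b) with hmdef
  have hbR : (0:ℝ) < b := by exact_mod_cast hb
  have habpos : 0 < (a:ℝ)/b := div_pos (by exact_mod_cast ha) hbR
  have hab1 : (a:ℝ)/b < 1 := by
    rw [div_lt_one hbR]; exact_mod_cast hab
  have hm0 : 0 < m := lt_of_lt_of_le habpos (le_max_left _ _)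
  have hm1 : m < 1 := max_lt hab1 (by linarith)
  have triv : ∀ k : ℕ, ∀ x : ℝ, x ∈ Set.Ioo δ (1-δ) →
      |(∑ i ∈ (Finset.range (k+1)).filter (fun i => i % b < a),
          (k.choose i : ℝ) * x^i * (1-x)^(k-i)) - a/b| ≤ m := by
    intro k x hx
    obtain ⟨hx1, hx2⟩ := hx
    have hx0 : 0 < x := lt_trans hδ hx1
    have hx3 : x < 1 := by linarith
    have hy0 : 0 < 1 - x := by linarith
    set S : ℝ := ∑ i ∈ (Finset.range (k+1)).filter (fun i => i % b < a),
          (k.choose i : ℝ) * x^i * (1-x)^(k-i) with hSdef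
    have hS0 : 0 ≤ S := Finset.sum_nonneg fun i _ => by positivity
    have hS1 : S ≤ 1 := by
      have hfull : ∑ i ∈ Finset.range (k+1), (k.choose i : ℝ) * x^i * (1-x)^(k-i) = 1 := by
        calc ∑ i ∈ Finset.range (k+1), (k.choose i : ℝ) * x^i * (1-x)^(k-i)
            = ∑ i ∈ Finset.range (k+1), x^i * (1-x)^(k-i) * (k.choose i : ℝ) := by
              exact Finset.sum_congr rfl fun i _ => by ring
          _ = (x + (1-x))^k := (add_pow x (1-x) k).symm
          _ = 1 := by norm_num
      calc S ≤ ∑ i ∈ Finset.range (k+1), (k.choose i : ℝ) * x^i * (1-x)^(k-i) :=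
            Finset.sum_le_sum_of_subset_of_nonneg (Finset.filter_subset _ _)
              (fun i _ _ => by positivity)
        _ = 1 := hfull
    rw [abs_le]
    constructor
    · have h := le_max_left ((a:ℝ)/b) (1 - (a:ℝ)/b)
      rw [← hmdef] at h; linarith
    · have h := le_max_right ((a:ℝ)/b) (1 - (a:ℝ)/b)
      rw [← hmdef] at h; linarith
  -- choose lambda
  set c : ℝ := -Real.log ρ with hcdef
  have hc : 0 < c := by
    rw [hcdef]
    exact neg_pos.mpr (Real.log_neg hρ0 hρ1)
  have hρexp : ρ = Real.exp (-c) := by rw [hcdef, neg_neg, Real.exp_log hρ0]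
  obtain ⟨N0, hN0⟩ := exists_nat_ge (Real.log ((b:ℝ)^2) * 2 / c)
  set N : ℕ := N0 + 1 with hNdef
  have hNpos : (0:ℝ) < N := by positivity
  have hmlog : Real.log m < 0 := Real.log_neg hm0 hm1
  set lam : ℝ := min (c/2) (-(Real.log m)/N) with hlamdef
  have hlam : 0 < lam := lt_min (by linarith) (div_pos (by linarith) hNpos)
  refine ⟨lam, hlam, ?_⟩
  intro k hk x hx
  clear_value lam c m N ρ ε
  have hρk : ρ^k = Real.exp (-(c*(k:ℝ))) := by
    rw [hρexp, ← Real.exp_nat_mul]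
    ring_nf
  by_cases hcase : (N:ℝ) ≤ (k:ℝ)
  · have h1 := key k x hx
    have hbsq : ((b:ℝ)^2) = Real.exp (Real.log ((b:ℝ)^2)) :=
      (Real.exp_log (by positivity)).symm
    have h2 : (b:ℝ)^2 * ρ^k = Real.exp (Real.log ((b:ℝ)^2) - c*(k:ℝ)) := by
      calc (b:ℝ)^2 * ρ^k = Real.exp (Real.log ((b:ℝ)^2)) * Real.exp (-(c*(k:ℝ))) := by
            rw [← hbsq, hρk]
        _ = Real.exp (Real.log ((b:ℝ)^2) - c*(k:ℝ)) := by
            rw [← Real.exp_add, ← sub_eq_add_neg]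
    have hl1 : lam ≤ c/2 := by rw [hlamdef]; exact min_le_left _ _
    have hNk : Real.log ((b:ℝ)^2) * 2 / c ≤ (k:ℝ) := by
      have : (N0:ℝ) ≤ (k:ℝ) := by
        refine le_trans ?_ hcase
        rw [hNdef]; push_cast; linarith
      linarith [hN0]
    have h3 : Real.log ((b:ℝ)^2) - c*(k:ℝ) ≤ -lam*(k:ℝ) := by
      have hL : Real.log ((b:ℝ)^2) ≤ c*(k:ℝ)/2 := by
        rw [div_le_iff₀ hc] at hNk
        linarith [hNk, mul_comm (k:ℝ) c]
      have hkR : (0:ℝ) ≤ (k:ℝ) := Nat.cast_nonneg k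
      have hmul := mul_le_mul_of_nonneg_right hl1 hkR
      have he1 : (c/2)*(k:ℝ) = c*(k:ℝ)/2 := by ring
      linarith [hmul, hL, he1]
    calc |(∑ i ∈ (Finset.range (k+1)).filter (fun i => i % b < a),
          (k.choose i : ℝ) * x^i * (1-x)^(k-i)) - a/b|
        ≤ (b:ℝ)^2 * ρ^k := h1
      _ = Real.exp (Real.log ((b:ℝ)^2) - c*(k:ℝ)) := h2
      _ ≤ Real.exp (-lam*(k:ℝ)) := Real.exp_le_exp.mpr h3
  · push_neg at hcase
    have h1 := triv k x hx
    have hkN : (k:ℝ) ≤ (N:ℝ) := le_of_lt hcase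
    have hl2 : lam ≤ -(Real.log m)/N := by rw [hlamdef]; exact min_le_right _ _
    have h3 : Real.log m ≤ -lam*(k:ℝ) := by
      have hkR : (0:ℝ) ≤ (k:ℝ) := Nat.cast_nonneg k
      have : lam * (k:ℝ) ≤ (-(Real.log m)/N) * (N:ℝ) :=
        mul_le_mul hl2 hkN hkR (div_nonneg (by linarith) (le_of_lt hNpos))
      rw [div_mul_cancel₀ _ (ne_of_gt hNpos)] at this
      linarith
    calc |(∑ i ∈ (Finset.range (k+1)).filter (fun i => i % b < a),
          (k.choose i : ℝ) * x^i * (1-x)^(k-i)) - a/b|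
        ≤ m := h1
      _ = Real.exp (Real.log m) := (Real.exp_log hm0).symm
      _ ≤ Real.exp (-lam*(k:ℝ)) := Real.exp_le_exp.mpr h3
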